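/- There exists a constant λ₁ ≥ 0 such that for every smooth periodic mean-zero field U = (v, T) on 𝕋³ with ∫_{−1}^1 ∇_H·v dz = 0, the coercivity inequality ⟨−ΔU + B(U, U) + G(U), U⟩_{L²} ≥ (1/2) ‖U‖_{W^{1,2}}² − λ₁ (1 + |U|_{L²}²) holds; in particular (B(U,U), U)_{L²} = 0 and |(G(U), U)_{L²}| ≤ C |U|_{L²} ‖U‖_{W^{1,2}}. -/

import Mathlib

open MeasureTheory Real

noncomputable section

/-- Points of `ℝ³`; the torus `𝕋³ = 𝕋² × (−1,1)` is modelled by periodic functions on `ℝ³`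
with periods `1, 1, 2`. -/
abbrev Pt : Type := ℝ × ℝ × ℝ

/-- A fundamental domain for the torus `𝕋³ = 𝕋² × (−1,1)`. -/
def D3 : Set Pt := Set.Icc (0:ℝ) 1 ×ˢ Set.Icc (0:ℝ) 1 ×ˢ Set.Icc (-1:ℝ) 1

/-- The (restriction of the) volume measure on the torus. -/
def μ3 : Measure Pt := volume.restrict D3

/-- Periodicity in `x, y` (period 1) and in `z` (period 2). -/
def Periodic3 (f : Pt → ℝ) : Prop :=
  (∀ x y z : ℝ, f (x + 1, y, z) = f (x, y, z)) ∧
  (∀ x y z : ℝ, f (x, y + 1, z) = f (x, y, z)) ∧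
  (∀ x y z : ℝ, f (x, y, z + 2) = f (x, y, z))

/-- Partial derivatives. -/
def dX (f : Pt → ℝ) (p : Pt) : ℝ := fderiv ℝ f p (1, 0, 0)
def dY (f : Pt → ℝ) (p : Pt) : ℝ := fderiv ℝ f p (0, 1, 0)
def dZ (f : Pt → ℝ) (p : Pt) : ℝ := fderiv ℝ f p (0, 0, 1)

/-- A smooth periodic function on the torus. -/
def Smooth3 (f : Pt → ℝ) : Prop := ContDiff ℝ (⊤ : ℕ∞) f ∧ Periodic3 f

/-- Mean zero over the torus. -/
def MeanZero3 (f : Pt → ℝ) : Prop := (∫ p in D3, f p) = 0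

/-- A horizontal vector field `v = (v¹, v²)`. -/
abbrev VF : Type := (Pt → ℝ) × (Pt → ℝ)

def SmoothV (v : VF) : Prop := Smooth3 v.1 ∧ Smooth3 v.2
def MeanZeroV (v : VF) : Prop := MeanZero3 v.1 ∧ MeanZero3 v.2

/-- Horizontal divergence `∇_H · v`. -/
def divH (v : VF) (p : Pt) : ℝ := dX v.1 p + dY v.2 p

/-- The constraint `∫_{−1}^1 ∇_H · v dz = 0`. -/
def DivFreeV (v : VF) : Prop := ∀ x y : ℝ, (∫ t in (-1:ℝ)..1, divH v (x, y, t)) = 0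

/-- `Φ(v)(x,y,z) = − ∫_{−1}^z ∇_H · v(x,y,z′) dz′`. -/
def Phi (v : VF) (p : Pt) : ℝ := -∫ t in (-1:ℝ)..p.2.2, divH v (p.1, p.2.1, t)

/-- The advection `(v · ∇_H) f`. -/
def advH (v : VF) (f : Pt → ℝ) (p : Pt) : ℝ := v.1 p * dX f p + v.2 p * dY f p

/-- `L²(𝕋³)` norm. -/
def L2 (f : Pt → ℝ) : ℝ := Real.sqrt (∫ p in D3, (f p) ^ 2)

def L2V (v : VF) : ℝ := Real.sqrt (∫ p in D3, ((v.1 p) ^ 2 + (v.2 p) ^ 2))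

def gradHsq (f : Pt → ℝ) (p : Pt) : ℝ := (dX f p) ^ 2 + (dY f p) ^ 2
def gradSq (f : Pt → ℝ) (p : Pt) : ℝ := (dX f p) ^ 2 + (dY f p) ^ 2 + (dZ f p) ^ 2

/-- `L²` norm of the horizontal gradient of a horizontal vector field. -/
def L2gradHV (v : VF) : ℝ := Real.sqrt (∫ p in D3, (gradHsq v.1 p + gradHsq v.2 p))

/-- `L²` norm of the full gradient of a horizontal vector field. -/
def L2gradV (v : VF) : ℝ := Real.sqrt (∫ p in D3, (gradSq v.1 p + gradSq v.2 p))

/-- `L²` norm of `∂_z v`. -/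
def L2dzV (v : VF) : ℝ := Real.sqrt (∫ p in D3, ((dZ v.1 p) ^ 2 + (dZ v.2 p) ^ 2))

/-- `L²` norm of `∇_H ∂_z v`. -/
def L2gradHdzV (v : VF) : ℝ :=
  Real.sqrt (∫ p in D3, (gradHsq (dZ v.1) p + gradHsq (dZ v.2) p))

/-- A field `U = (v, T)` consisting of a horizontal vector field and a scalar. -/
abbrev Fld : Type := VF × (Pt → ℝ)

def SmoothF (U : Fld) : Prop := SmoothV U.1 ∧ Smooth3 U.2
def MeanZeroF (U : Fld) : Prop := MeanZeroV U.1 ∧ MeanZero3 U.2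

def L2F (U : Fld) : ℝ :=
  Real.sqrt (∫ p in D3, ((U.1.1 p) ^ 2 + (U.1.2 p) ^ 2 + (U.2 p) ^ 2))

/-- `W^{1,2}(𝕋³)` norm of a field. -/
def W12F (U : Fld) : ℝ :=
  Real.sqrt (∫ p in D3,
    ((U.1.1 p) ^ 2 + (U.1.2 p) ^ 2 + (U.2 p) ^ 2 +
      gradSq U.1.1 p + gradSq U.1.2 p + gradSq U.2 p))

/-- `H³(𝕋³)` norm of a scalar function. -/
def H3 (f : Pt → ℝ) : ℝ :=
  Real.sqrt (∫ p in D3, ∑ k ∈ Finset.range 4, ‖iteratedFDeriv ℝ k f p‖ ^ 2)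

def H3F (U : Fld) : ℝ := Real.sqrt ((H3 U.1.1) ^ 2 + (H3 U.1.2) ^ 2 + (H3 U.2) ^ 2)

/-- `L²` pairing of two fields. -/
def pairF (U W : Fld) : ℝ :=
  ∫ p in D3, (U.1.1 p * W.1.1 p + U.1.2 p * W.1.2 p + U.2 p * W.2 p)

def subF (U W : Fld) : Fld :=
  ((fun p => U.1.1 p - W.1.1 p, fun p => U.1.2 p - W.1.2 p), fun p => U.2 p - W.2 p)

/-- Three-dimensional Laplacian. -/
def lap (f : Pt → ℝ) : Pt → ℝ := fun p => dX (dX f) p + dY (dY f) p + dZ (dZ f) p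

def lapF (U : Fld) : Fld := ((lap U.1.1, lap U.1.2), lap U.2)

/-- The nonlinearity `B(U, U₁)` of the primitive equations. -/
def BF (U U₁ : Fld) : Fld :=
  ((fun p => advH U.1 U₁.1.1 p + Phi U.1 p * dZ U₁.1.1 p,
    fun p => advH U.1 U₁.1.2 p + Phi U.1 p * dZ U₁.1.2 p),
   fun p => advH U.1 U₁.2 p + Phi U.1 p * dZ U₁.2 p)

/-- `G(U) = (f k × v − ∫_{−1}^z ∇_H T dz′, Φ(v))` with Coriolis parameter `fc`. -/
def GF (fc : ℝ) (U : Fld) : Fld :=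
  ((fun p => -fc * U.1.2 p - ∫ t in (-1:ℝ)..p.2.2, dX U.2 (p.1, p.2.1, t),
    fun p => fc * U.1.1 p - ∫ t in (-1:ℝ)..p.2.2, dY U.2 (p.1, p.2.1, t)),
   fun p => Phi U.1 p)

/-! ### Fourier analysis on the torus: the operator `Λ^s = (−Δ)^{s/2}` -/

/-- Euclidean norm of the frequency attached to `k ∈ ℤ³` (periods `1,1,2`). -/
def freqNorm (k : ℤ × ℤ × ℤ) : ℝ :=
  Real.sqrt ((2 * π * (k.1 : ℝ)) ^ 2 + (2 * π * (k.2.1 : ℝ)) ^ 2 + (π * (k.2.2 : ℝ)) ^ 2)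

/-- The character `e^{i (2π k₁ x + 2π k₂ y + π k₃ z)}`. -/
def chr (k : ℤ × ℤ × ℤ) (p : Pt) : ℂ :=
  Complex.exp (Complex.I *
    (2 * π * (k.1 : ℝ) * p.1 + 2 * π * (k.2.1 : ℝ) * p.2.1 + π * (k.2.2 : ℝ) * p.2.2))

/-- Fourier coefficient of `f` (the volume of the fundamental domain is `2`). -/
def fCoeff (f : Pt → ℝ) (k : ℤ × ℤ × ℤ) : ℂ :=
  (1 / 2 : ℂ) * ∫ p in D3, (f p : ℂ) * chr (-k) p

/-- `Λ^s f = (−Δ)^{s/2} f`, defined via Fourier series (on mean-zero functions). -/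
def Lam (s : ℝ) (f : Pt → ℝ) (p : Pt) : ℝ :=
  (∑' k : ℤ × ℤ × ℤ, ((freqNorm k ^ s : ℝ) : ℂ) * fCoeff f k * chr k p).re

/-- `|Λ^s f|_{L²(𝕋³)}`. -/
def LamL2 (s : ℝ) (f : Pt → ℝ) : ℝ := Real.sqrt (∫ p in D3, (Lam s f p) ^ 2)

/-- `|Λ^s v|_{L²(𝕋³)}` for a horizontal vector field. -/
def LamL2V (s : ℝ) (v : VF) : ℝ := Real.sqrt ((LamL2 s v.1) ^ 2 + (LamL2 s v.2) ^ 2)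


/-- The full drift `−ΔU + B(U,U) + G(U)` of the primitive equations. -/
def PEop (fc : ℝ) (U : Fld) : Fld :=
  ((fun p => -(lap U.1.1 p) + (BF U U).1.1 p + (GF fc U).1.1 p,
    fun p => -(lap U.1.2 p) + (BF U U).1.2 p + (GF fc U).1.2 p),
   fun p => -(lap U.2 p) + (BF U U).2 p + (GF fc U).2 p)

/-! ### Auxiliary development -/

namespace PEProof

abbrev I1 : Set ℝ := Set.Icc (0:ℝ) 1
abbrev I2 : Set ℝ := Set.Icc (-1:ℝ) 1

lemma isCompact_D3 : IsCompact D3 :=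
  isCompact_Icc.prod (isCompact_Icc.prod isCompact_Icc)

lemma measurableSet_D3 : MeasurableSet D3 :=
  measurableSet_Icc.prod (measurableSet_Icc.prod measurableSet_Icc)

lemma intOn {F : Pt → ℝ} (hF : Continuous F) : IntegrableOn F D3 :=
  hF.continuousOn.integrableOn_compact isCompact_D3

lemma m3_eq :
    ((volume.restrict I1).prod ((volume.restrict I1).prod (volume.restrict I2)))
      = volume.restrict D3 := by
  rw [Measure.prod_restrict, Measure.prod_restrict, ← Measure.volume_eq_prod, ← Measure.volume_eq_prod]
  rfl

lemma int_m3 {F : Pt → ℝ} (hF : Continuous F) :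
    Integrable F ((volume.restrict I1).prod ((volume.restrict I1).prod (volume.restrict I2))) := by
  rw [m3_eq]; exact intOn hF

lemma int_m2 {F : ℝ × ℝ → ℝ} (hF : Continuous F) :
    Integrable F ((volume.restrict I1).prod (volume.restrict I2)) := by
  rw [Measure.prod_restrict, ← Measure.volume_eq_prod]
  exact hF.continuousOn.integrableOn_compact (isCompact_Icc.prod isCompact_Icc)

lemma Icc_int (a b : ℝ) (h : a ≤ b) (f : ℝ → ℝ) :
    ∫ t in Set.Icc a b, f t = ∫ t in a..b, f t := by
  rw [intervalIntegral.integral_of_le h, MeasureTheory.integral_Icc_eq_integral_Ioc]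

lemma fubini3 {F : Pt → ℝ} (hF : Continuous F) :
    ∫ p in D3, F p = ∫ x in I1, ∫ y in I1, ∫ z in I2, F (x, y, z) := by
  rw [← m3_eq, MeasureTheory.integral_prod _ (int_m3 hF)]
  refine integral_congr_ae (Filter.Eventually.of_forall fun x => ?_)
  exact MeasureTheory.integral_prod (fun q : ℝ × ℝ => F (x, q))
    (int_m2 (F := fun q : ℝ × ℝ => F (x, q)) (hF.comp (Continuous.prodMk_right x)))

/-! ### Derivatives -/

lemma smoothD {f : Pt → ℝ} (hf : ContDiff ℝ (⊤:ℕ∞) f) (v : Pt) :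
    ContDiff ℝ (⊤:ℕ∞) fun p => fderiv ℝ f p v :=
  (hf.fderiv_right (by exact_mod_cast le_top)).clm_apply contDiff_const

lemma sm_dX {f : Pt → ℝ} (hf : ContDiff ℝ (⊤:ℕ∞) f) : ContDiff ℝ (⊤:ℕ∞) (dX f) :=
  smoothD hf _

lemma sm_dY {f : Pt → ℝ} (hf : ContDiff ℝ (⊤:ℕ∞) f) : ContDiff ℝ (⊤:ℕ∞) (dY f) :=
  smoothD hf _

lemma sm_dZ {f : Pt → ℝ} (hf : ContDiff ℝ (⊤:ℕ∞) f) : ContDiff ℝ (⊤:ℕ∞) (dZ f) :=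
  smoothD hf _

lemma slice_hasDerivAt_x {f : Pt → ℝ} (hf : Differentiable ℝ f) (x y z : ℝ) :
    HasDerivAt (fun t => f (t, y, z)) (dX f (x, y, z)) x :=
  (hf (x, y, z)).hasFDerivAt.comp_hasDerivAt x
    (HasDerivAt.prodMk (hasDerivAt_id x) (hasDerivAt_const x (y, z)))

lemma slice_hasDerivAt_y {f : Pt → ℝ} (hf : Differentiable ℝ f) (x y z : ℝ) :
    HasDerivAt (fun t => f (x, t, z)) (dY f (x, y, z)) y :=
  (hf (x, y, z)).hasFDerivAt.comp_hasDerivAt y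
    (HasDerivAt.prodMk (hasDerivAt_const y x) (HasDerivAt.prodMk (hasDerivAt_id y) (hasDerivAt_const y z)))

lemma slice_hasDerivAt_z {f : Pt → ℝ} (hf : Differentiable ℝ f) (x y z : ℝ) :
    HasDerivAt (fun t => f (x, y, t)) (dZ f (x, y, z)) z :=
  (hf (x, y, z)).hasFDerivAt.comp_hasDerivAt z
    (HasDerivAt.prodMk (hasDerivAt_const z x) (HasDerivAt.prodMk (hasDerivAt_const z y) (hasDerivAt_id z)))

lemma fderiv_shift {f : Pt → ℝ} (hf : Differentiable ℝ f) {c : Pt}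
    (h : ∀ p : Pt, f (p + c) = f p) (p : Pt) :
    fderiv ℝ f (p + c) = fderiv ℝ f p := by
  have h1 : HasFDerivAt (fun q : Pt => f (q + c))
      ((fderiv ℝ f (p + c)).comp (ContinuousLinearMap.id ℝ Pt)) p :=
    (hf (p + c)).hasFDerivAt.comp p ((hasFDerivAt_id p).add_const c)
  rw [ContinuousLinearMap.comp_id] at h1
  have h2 : (fun q : Pt => f (q + c)) = f := funext h
  rw [h2] at h1
  exact (h1.fderiv).symm

lemma shift1 {f : Pt → ℝ} (h : Periodic3 f) (p : Pt) :
    f (p + ((1:ℝ), (0:ℝ), (0:ℝ))) = f p := by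
  obtain ⟨x, y, z⟩ := p
  have e : ((x, y, z) : Pt) + ((1:ℝ), (0:ℝ), (0:ℝ)) = (x + 1, y, z) := by
    simp [Prod.ext_iff]
  rw [e, h.1 x y z]

lemma shift2 {f : Pt → ℝ} (h : Periodic3 f) (p : Pt) :
    f (p + ((0:ℝ), (1:ℝ), (0:ℝ))) = f p := by
  obtain ⟨x, y, z⟩ := p
  have e : ((x, y, z) : Pt) + ((0:ℝ), (1:ℝ), (0:ℝ)) = (x, y + 1, z) := by
    simp [Prod.ext_iff]
  rw [e, h.2.1 x y z]

lemma shift3 {f : Pt → ℝ} (h : Periodic3 f) (p : Pt) :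
    f (p + ((0:ℝ), (0:ℝ), (2:ℝ))) = f p := by
  obtain ⟨x, y, z⟩ := p
  have e : ((x, y, z) : Pt) + ((0:ℝ), (0:ℝ), (2:ℝ)) = (x, y, z + 2) := by
    simp [Prod.ext_iff]
  rw [e, h.2.2 x y z]

lemma dPeriodic {f : Pt → ℝ} (hf : Differentiable ℝ f) (h : Periodic3 f) (v : Pt) :
    Periodic3 fun p => fderiv ℝ f p v := by
  refine ⟨fun x y z => ?_, fun x y z => ?_, fun x y z => ?_⟩
  · have e : ((x, y, z) : Pt) + ((1:ℝ), (0:ℝ), (0:ℝ)) = (x + 1, y, z) := by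
      simp [Prod.ext_iff]
    have := fderiv_shift hf (shift1 h) (x, y, z)
    rw [e] at this
    exact congrArg (fun L => L v) this
  · have e : ((x, y, z) : Pt) + ((0:ℝ), (1:ℝ), (0:ℝ)) = (x, y + 1, z) := by
      simp [Prod.ext_iff]
    have := fderiv_shift hf (shift2 h) (x, y, z)
    rw [e] at this
    exact congrArg (fun L => L v) this
  · have e : ((x, y, z) : Pt) + ((0:ℝ), (0:ℝ), (2:ℝ)) = (x, y, z + 2) := by
      simp [Prod.ext_iff]
    have := fderiv_shift hf (shift3 h) (x, y, z)
    rw [e] at this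
    exact congrArg (fun L => L v) this

lemma smooth3_dX {f : Pt → ℝ} (hf : Smooth3 f) : Smooth3 (dX f) :=
  ⟨sm_dX hf.1, dPeriodic (hf.1.differentiable (by simp)) hf.2 _⟩

lemma smooth3_dY {f : Pt → ℝ} (hf : Smooth3 f) : Smooth3 (dY f) :=
  ⟨sm_dY hf.1, dPeriodic (hf.1.differentiable (by simp)) hf.2 _⟩

lemma smooth3_dZ {f : Pt → ℝ} (hf : Smooth3 f) : Smooth3 (dZ f) :=
  ⟨sm_dZ hf.1, dPeriodic (hf.1.differentiable (by simp)) hf.2 _⟩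

lemma smooth3_mul {f g : Pt → ℝ} (hf : Smooth3 f) (hg : Smooth3 g) :
    Smooth3 fun p => f p * g p := by
  refine ⟨hf.1.mul hg.1, fun x y z => ?_, fun x y z => ?_, fun x y z => ?_⟩
  · simp only [hf.2.1 x y z, hg.2.1 x y z]
  · simp only [hf.2.2.1 x y z, hg.2.2.1 x y z]
  · simp only [hf.2.2.2 x y z, hg.2.2.2 x y z]

lemma smooth3_add {f g : Pt → ℝ} (hf : Smooth3 f) (hg : Smooth3 g) :
    Smooth3 fun p => f p + g p := by
  refine ⟨hf.1.add hg.1, fun x y z => ?_, fun x y z => ?_, fun x y z => ?_⟩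
  · simp only [hf.2.1 x y z, hg.2.1 x y z]
  · simp only [hf.2.2.1 x y z, hg.2.2.1 x y z]
  · simp only [hf.2.2.2 x y z, hg.2.2.2 x y z]

lemma fderiv_Q {a b c : Pt → ℝ} (ha : Differentiable ℝ a) (hb : Differentiable ℝ b)
    (hc : Differentiable ℝ c) (p : Pt) (w : Pt) :
    fderiv ℝ (fun q => a q * a q + b q * b q + c q * c q) p w
      = 2 * (a p * fderiv ℝ a p w) + 2 * (b p * fderiv ℝ b p w)
        + 2 * (c p * fderiv ℝ c p w) := by
  rw [fderiv_fun_add (((ha p).fun_mul (ha p)).fun_add ((hb p).fun_mul (hb p))) ((hc p).fun_mul (hc p)),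
    fderiv_fun_add ((ha p).fun_mul (ha p)) ((hb p).fun_mul (hb p)),
    fderiv_fun_mul (ha p) (ha p), fderiv_fun_mul (hb p) (hb p), fderiv_fun_mul (hc p) (hc p)]
  simp only [ContinuousLinearMap.add_apply, ContinuousLinearMap.smul_apply, smul_eq_mul]
  ring

lemma fderiv_apply_mul {f g : Pt → ℝ} (hf : Differentiable ℝ f) (hg : Differentiable ℝ g)
    (p : Pt) (w : Pt) :
    fderiv ℝ (fun q => f q * g q) p w = f p * fderiv ℝ g p w + g p * fderiv ℝ f p w := by
  rw [fderiv_fun_mul (hf p) (hg p)]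
  simp only [ContinuousLinearMap.add_apply, ContinuousLinearMap.smul_apply, smul_eq_mul]

/-! ### Vanishing integrals of derivatives and integration by parts -/

lemma intX_zero {f : Pt → ℝ} (hf : ContDiff ℝ (⊤:ℕ∞) f)
    (hper : ∀ x y z : ℝ, f (x + 1, y, z) = f (x, y, z)) :
    ∫ p in D3, dX f p = 0 := by
  have hdiff : Differentiable ℝ f := hf.differentiable (by simp)
  have hc : Continuous (dX f) := (sm_dX hf).continuous
  have inner0 : ∀ w : ℝ × ℝ, (∫ x in I1, dX f (x, w)) = 0 := by
    rintro ⟨w1, w2⟩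
    rw [Icc_int 0 1 zero_le_one]
    rw [intervalIntegral.integral_eq_sub_of_hasDerivAt
      (fun x _ => slice_hasDerivAt_x hdiff x w1 w2)
      ((hc.comp (continuous_id.prodMk continuous_const)).intervalIntegrable 0 1)]
    have h01 : f (1, w1, w2) = f (0, w1, w2) := by simpa using hper 0 w1 w2
    rw [h01, sub_self]
  rw [← m3_eq, MeasureTheory.integral_prod_symm _ (int_m3 hc)]
  simp only [inner0]
  simp

lemma intY_zero {f : Pt → ℝ} (hf : ContDiff ℝ (⊤:ℕ∞) f)
    (hper : ∀ x y z : ℝ, f (x, y + 1, z) = f (x, y, z)) :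
    ∫ p in D3, dY f p = 0 := by
  have hdiff : Differentiable ℝ f := hf.differentiable (by simp)
  have hc : Continuous (dY f) := (sm_dY hf).continuous
  have inner0 : ∀ x : ℝ,
      (∫ w, dY f (x, w) ∂((volume.restrict I1).prod (volume.restrict I2))) = 0 := by
    intro x
    rw [MeasureTheory.integral_prod_symm (fun q : ℝ × ℝ => dY f (x, q))
      (int_m2 (F := fun q : ℝ × ℝ => dY f (x, q)) (hc.comp (Continuous.prodMk_right x)))]
    have in2 : ∀ z : ℝ, (∫ y in I1, dY f (x, y, z)) = 0 := by
      intro z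
      rw [Icc_int 0 1 zero_le_one]
      rw [intervalIntegral.integral_eq_sub_of_hasDerivAt
        (fun y _ => slice_hasDerivAt_y hdiff x y z)
        ((hc.comp ((continuous_const (y := x)).prodMk
          (continuous_id.prodMk continuous_const))).intervalIntegrable 0 1)]
      have h01 : f (x, 1, z) = f (x, 0, z) := by simpa using hper x 0 z
      rw [h01, sub_self]
    simp only [in2]
    simp
  rw [← m3_eq, MeasureTheory.integral_prod _ (int_m3 hc)]
  simp only [inner0]
  simp

lemma intZ_zero {f : Pt → ℝ} (hf : ContDiff ℝ (⊤:ℕ∞) f)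
    (hper : ∀ x y z : ℝ, f (x, y, z + 2) = f (x, y, z)) :
    ∫ p in D3, dZ f p = 0 := by
  have hdiff : Differentiable ℝ f := hf.differentiable (by simp)
  have hc : Continuous (dZ f) := (sm_dZ hf).continuous
  rw [fubini3 hc]
  have in2 : ∀ x y : ℝ, (∫ z in I2, dZ f (x, y, z)) = 0 := by
    intro x y
    rw [Icc_int (-1) 1 (by norm_num)]
    rw [intervalIntegral.integral_eq_sub_of_hasDerivAt
      (fun z _ => slice_hasDerivAt_z hdiff x y z)
      ((hc.comp ((continuous_const (y := x)).prodMk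
        ((continuous_const (y := y)).prodMk continuous_id))).intervalIntegrable (-1) 1)]
    have h01 : f (x, y, 1) = f (x, y, -1) := by
      have := hper x y (-1)
      norm_num at this
      exact this
    rw [h01, sub_self]
  simp only [in2]
  simp

lemma ibpX {f g : Pt → ℝ} (hf : Smooth3 f) (hg : Smooth3 g) :
    ∫ p in D3, dX f p * g p = -∫ p in D3, f p * dX g p := by
  have hdf : Differentiable ℝ f := hf.1.differentiable (by simp)
  have hdg : Differentiable ℝ g := hg.1.differentiable (by simp)
  have hz : ∫ p in D3, dX (fun q => f q * g q) p = 0 :=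
    intX_zero (hf.1.mul hg.1) (smooth3_mul hf hg).2.1
  have hder : ∀ p, dX (fun q => f q * g q) p = f p * dX g p + g p * dX f p := fun p =>
    fderiv_apply_mul hdf hdg p _
  have c1 : Continuous fun p => f p * dX g p := hf.1.continuous.mul (sm_dX hg.1).continuous
  have c2 : Continuous fun p => g p * dX f p := hg.1.continuous.mul (sm_dX hf.1).continuous
  have h0 : (∫ p in D3, f p * dX g p) + (∫ p in D3, g p * dX f p) = 0 := by
    rw [← MeasureTheory.integral_add (intOn c1) (intOn c2), ← hz]
    exact integral_congr_ae (Filter.Eventually.of_forall fun p => (hder p).symm)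
  have hcomm : ∫ p in D3, dX f p * g p = ∫ p in D3, g p * dX f p :=
    integral_congr_ae (Filter.Eventually.of_forall fun p => mul_comm _ _)
  rw [hcomm]
  linarith

lemma ibpY {f g : Pt → ℝ} (hf : Smooth3 f) (hg : Smooth3 g) :
    ∫ p in D3, dY f p * g p = -∫ p in D3, f p * dY g p := by
  have hdf : Differentiable ℝ f := hf.1.differentiable (by simp)
  have hdg : Differentiable ℝ g := hg.1.differentiable (by simp)
  have hz : ∫ p in D3, dY (fun q => f q * g q) p = 0 :=
    intY_zero (hf.1.mul hg.1) (smooth3_mul hf hg).2.2.1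
  have hder : ∀ p, dY (fun q => f q * g q) p = f p * dY g p + g p * dY f p := fun p =>
    fderiv_apply_mul hdf hdg p _
  have c1 : Continuous fun p => f p * dY g p := hf.1.continuous.mul (sm_dY hg.1).continuous
  have c2 : Continuous fun p => g p * dY f p := hg.1.continuous.mul (sm_dY hf.1).continuous
  have h0 : (∫ p in D3, f p * dY g p) + (∫ p in D3, g p * dY f p) = 0 := by
    rw [← MeasureTheory.integral_add (intOn c1) (intOn c2), ← hz]
    exact integral_congr_ae (Filter.Eventually.of_forall fun p => (hder p).symm)
  have hcomm : ∫ p in D3, dY f p * g p = ∫ p in D3, g p * dY f p :=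
    integral_congr_ae (Filter.Eventually.of_forall fun p => mul_comm _ _)
  rw [hcomm]
  linarith

lemma ibpZ {f g : Pt → ℝ} (hf : Smooth3 f) (hg : Smooth3 g) :
    ∫ p in D3, dZ f p * g p = -∫ p in D3, f p * dZ g p := by
  have hdf : Differentiable ℝ f := hf.1.differentiable (by simp)
  have hdg : Differentiable ℝ g := hg.1.differentiable (by simp)
  have hz : ∫ p in D3, dZ (fun q => f q * g q) p = 0 :=
    intZ_zero (hf.1.mul hg.1) (smooth3_mul hf hg).2.2.2
  have hder : ∀ p, dZ (fun q => f q * g q) p = f p * dZ g p + g p * dZ f p := fun p =>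
    fderiv_apply_mul hdf hdg p _
  have c1 : Continuous fun p => f p * dZ g p := hf.1.continuous.mul (sm_dZ hg.1).continuous
  have c2 : Continuous fun p => g p * dZ f p := hg.1.continuous.mul (sm_dZ hf.1).continuous
  have h0 : (∫ p in D3, f p * dZ g p) + (∫ p in D3, g p * dZ f p) = 0 := by
    rw [← MeasureTheory.integral_add (intOn c1) (intOn c2), ← hz]
    exact integral_congr_ae (Filter.Eventually.of_forall fun p => (hder p).symm)
  have hcomm : ∫ p in D3, dZ f p * g p = ∫ p in D3, g p * dZ f p :=
    integral_congr_ae (Filter.Eventually.of_forall fun p => mul_comm _ _)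
  rw [hcomm]
  linarith

/-! ### Laplacian pairing -/

lemma lap_pair {u : Pt → ℝ} (hu : Smooth3 u) :
    ∫ p in D3, -(lap u p) * u p = ∫ p in D3, gradSq u p := by
  have cu : Continuous u := hu.1.continuous
  have cX : Continuous (dX u) := (sm_dX hu.1).continuous
  have cY : Continuous (dY u) := (sm_dY hu.1).continuous
  have cZ : Continuous (dZ u) := (sm_dZ hu.1).continuous
  have cXX : Continuous fun p => dX (dX u) p * u p :=
    ((sm_dX (sm_dX hu.1)).continuous).mul cu
  have cYY : Continuous fun p => dY (dY u) p * u p :=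
    ((sm_dY (sm_dY hu.1)).continuous).mul cu
  have cZZ : Continuous fun p => dZ (dZ u) p * u p :=
    ((sm_dZ (sm_dZ hu.1)).continuous).mul cu
  have hXX := ibpX (smooth3_dX hu) hu
  have hYY := ibpY (smooth3_dY hu) hu
  have hZZ := ibpZ (smooth3_dZ hu) hu
  have e1 : ∫ p in D3, -(lap u p) * u p
      = -((∫ p in D3, dX (dX u) p * u p) + ((∫ p in D3, dY (dY u) p * u p)
          + (∫ p in D3, dZ (dZ u) p * u p))) := by
    rw [← MeasureTheory.integral_add (intOn cYY) (intOn cZZ),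
      ← MeasureTheory.integral_add (intOn cXX) (intOn (cYY.fun_add cZZ)), ← integral_neg]
    exact integral_congr_ae (Filter.Eventually.of_forall fun p => by simp [lap]; ring)
  rw [e1, hXX, hYY, hZZ]
  have e2 : ∫ p in D3, gradSq u p
      = (∫ p in D3, dX u p * dX u p) + ((∫ p in D3, dY u p * dY u p)
          + (∫ p in D3, dZ u p * dZ u p)) := by
    rw [← MeasureTheory.integral_add (intOn (cY.fun_mul cY)) (intOn (cZ.fun_mul cZ)),
      ← MeasureTheory.integral_add (intOn (cX.fun_mul cX)) (intOn ((cY.fun_mul cY).fun_add (cZ.fun_mul cZ)))]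
    exact integral_congr_ae (Filter.Eventually.of_forall fun p => by simp [gradSq]; ring)
  rw [e2]
  ring

/-! ### Parametric integrals : continuity and FTC facts -/

lemma contP {h : Pt → ℝ} (hh : Continuous h) :
    Continuous fun p : Pt => ∫ t in (-1:ℝ)..p.2.2, h (p.1, p.2.1, t) := by
  apply intervalIntegral.continuous_parametric_intervalIntegral_of_continuous
    (f := fun (p : Pt) (t : ℝ) => h (p.1, p.2.1, t)) (μ := volume)
  · exact hh.comp (by fun_prop)
  · fun_prop

lemma cont_divH {v : VF} (hv : SmoothV v) : Continuous (divH v) :=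
  ((sm_dX hv.1.1).continuous).add ((sm_dY hv.2.1).continuous)

lemma cont_Phi {v : VF} (hv : SmoothV v) : Continuous (Phi v) := by
  have := (contP (cont_divH hv)).fun_neg
  exact this

/-! ### Cauchy-Schwarz -/

lemma cs_general {α : Type*} {m : MeasurableSpace α} {μ : Measure α} {f g : α → ℝ}
    (hf : MemLp f 2 μ) (hg : MemLp g 2 μ) :
    |∫ a, f a * g a ∂μ| ≤ Real.sqrt (∫ a, (f a)^2 ∂μ) * Real.sqrt (∫ a, (g a)^2 ∂μ) := by
  have h2 : (ENNReal.ofReal 2) = 2 := by norm_num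
  have key := MeasureTheory.integral_mul_norm_le_Lp_mul_Lq (μ := μ) (f := f) (g := g)
      Real.HolderConjugate.two_two (by rw [h2]; exact hf)
      (by rw [h2]; exact hg)
  have e1 : ∀ h : α → ℝ, (∫ a, ‖h a‖ ^ (2:ℝ) ∂μ) = ∫ a, (h a)^2 ∂μ := fun h =>
    integral_congr_ae (Filter.Eventually.of_forall fun a => by
      show ‖h a‖ ^ (2:ℝ) = (h a)^2
      rw [Real.rpow_two]
      simp [Real.norm_eq_abs, sq_abs])
  calc |∫ a, f a * g a ∂μ| ≤ ∫ a, ‖f a * g a‖ ∂μ := by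
        rw [← Real.norm_eq_abs]; exact norm_integral_le_integral_norm _
    _ = ∫ a, ‖f a‖ * ‖g a‖ ∂μ := by
        exact integral_congr_ae (Filter.Eventually.of_forall fun a => by
          simp [Real.norm_eq_abs, abs_mul])
    _ ≤ (∫ a, ‖f a‖ ^ (2:ℝ) ∂μ) ^ (1/(2:ℝ)) * (∫ a, ‖g a‖ ^ (2:ℝ) ∂μ) ^ (1/(2:ℝ)) := key
    _ = Real.sqrt (∫ a, (f a)^2 ∂μ) * Real.sqrt (∫ a, (g a)^2 ∂μ) := by
        rw [e1 f, e1 g, ← Real.sqrt_eq_rpow, ← Real.sqrt_eq_rpow]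

lemma memL2_D3 {F : Pt → ℝ} (hF : Continuous F) : MemLp F 2 (volume.restrict D3) :=
  (memLp_two_iff_integrable_sq hF.aestronglyMeasurable).2 (intOn (hF.pow 2))

lemma csD3 {f g : Pt → ℝ} (hf : Continuous f) (hg : Continuous g) :
    |∫ p in D3, f p * g p| ≤ Real.sqrt (∫ p in D3, (f p)^2) * Real.sqrt (∫ p in D3, (g p)^2) :=
  cs_general (memL2_D3 hf) (memL2_D3 hg)

lemma cs1 {g : ℝ → ℝ} (hg : Continuous g) {a b : ℝ} (hab : a ≤ b) :
    (∫ t in a..b, g t)^2 ≤ (b - a) * ∫ t in a..b, (g t)^2 := by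
  haveI : IsFiniteMeasure (volume.restrict (Set.Ioc a b)) :=
    ⟨by rw [Measure.restrict_apply_univ]; exact measure_Ioc_lt_top⟩
  have hgm : MemLp g 2 (volume.restrict (Set.Ioc a b)) :=
    (memLp_two_iff_integrable_sq hg.aestronglyMeasurable).2 ((hg.pow 2).integrableOn_Ioc)
  have h1m : MemLp (fun _ : ℝ => (1:ℝ)) 2 (volume.restrict (Set.Ioc a b)) := memLp_const 1
  have key := cs_general h1m hgm
  have h1g : (∫ t in Set.Ioc a b, (fun _ : ℝ => (1:ℝ)) t * g t) = ∫ t in Set.Ioc a b, g t := by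
    simp
  have hI2 : (∫ _ in Set.Ioc a b, ((1:ℝ))^2) = b - a := by
    simp [Real.volume_Ioc, ENNReal.toReal_ofReal (sub_nonneg.2 hab), hab]
  rw [h1g, hI2] at key
  have hnn : 0 ≤ ∫ t in Set.Ioc a b, (g t)^2 :=
    setIntegral_nonneg measurableSet_Ioc fun t _ => sq_nonneg _
  rw [intervalIntegral.integral_of_le hab, intervalIntegral.integral_of_le hab]
  calc (∫ t in Set.Ioc a b, g t)^2 = |∫ t in Set.Ioc a b, g t|^2 := (sq_abs _).symm
    _ ≤ (Real.sqrt (b - a) * Real.sqrt (∫ t in Set.Ioc a b, (g t)^2))^2 :=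
        pow_le_pow_left₀ (abs_nonneg _) key 2
    _ = (b - a) * ∫ t in Set.Ioc a b, (g t)^2 := by
        rw [mul_pow, Real.sq_sqrt (sub_nonneg.2 hab), Real.sq_sqrt hnn]

/-! ### Integration by parts in `z` against `Phi` -/

lemma phi_ibp {v : VF} (hv : SmoothV v) (hdiv : DivFreeV v) {Q : Pt → ℝ}
    (hQ : ContDiff ℝ (⊤:ℕ∞) Q) :
    ∫ p in D3, Phi v p * dZ Q p = ∫ p in D3, divH v p * Q p := by
  have hdivc : Continuous (divH v) := cont_divH hv
  have hPhi : Continuous (Phi v) := cont_Phi hv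
  have hQd : Differentiable ℝ Q := hQ.differentiable (by simp)
  have cdZQ : Continuous (dZ Q) := (sm_dZ hQ).continuous
  rw [fubini3 (hPhi.fun_mul cdZQ), fubini3 (hdivc.fun_mul hQ.continuous)]
  refine integral_congr_ae (Filter.Eventually.of_forall fun x => ?_)
  refine integral_congr_ae (Filter.Eventually.of_forall fun y => ?_)
  show (∫ z in I2, Phi v (x, y, z) * dZ Q (x, y, z))
      = ∫ z in I2, divH v (x, y, z) * Q (x, y, z)
  rw [Icc_int (-1) 1 (by norm_num), Icc_int (-1) 1 (by norm_num)]
  have hgc : Continuous fun t => divH v (x, y, t) := hdivc.comp (by fun_prop)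
  have hu : ∀ z ∈ Set.uIcc (-1:ℝ) 1,
      HasDerivAt (fun z => Phi v (x, y, z)) (-(divH v (x, y, z))) z := by
    intro z _
    have h1 : HasDerivAt (fun u : ℝ => ∫ t in (-1:ℝ)..u, divH v (x, y, t))
        (divH v (x, y, z)) z :=
      intervalIntegral.integral_hasDerivAt_right (hgc.intervalIntegrable _ _)
        (hgc.stronglyMeasurableAtFilter _ _) hgc.continuousAt
    exact h1.neg
  have hvd : ∀ z ∈ Set.uIcc (-1:ℝ) 1,
      HasDerivAt (fun z => Q (x, y, z)) (dZ Q (x, y, z)) z :=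
    fun z _ => slice_hasDerivAt_z hQd x y z
  have hu' : IntervalIntegrable (fun z => -(divH v (x, y, z))) volume (-1) 1 :=
    (hgc.neg).intervalIntegrable _ _
  have hv' : IntervalIntegrable (fun z => dZ Q (x, y, z)) volume (-1) 1 :=
    (cdZQ.comp (by fun_prop : Continuous fun z : ℝ => ((x, y, z) : Pt))).intervalIntegrable _ _
  have key := intervalIntegral.integral_mul_deriv_eq_deriv_mul hu hvd hu' hv'
  have hP1 : Phi v (x, y, (1:ℝ)) = 0 := by
    show -(∫ t in (-1:ℝ)..(1:ℝ), divH v (x, y, t)) = 0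
    rw [hdiv x y]; ring
  have hPm1 : Phi v (x, y, (-1:ℝ)) = 0 := by
    show -(∫ t in (-1:ℝ)..(-1:ℝ), divH v (x, y, t)) = 0
    rw [intervalIntegral.integral_same]; ring
  rw [hP1, hPm1] at key
  rw [key]
  have hneg : (∫ z in (-1:ℝ)..1, -(divH v (x, y, z)) * Q (x, y, z))
      = -∫ z in (-1:ℝ)..1, divH v (x, y, z) * Q (x, y, z) := by
    rw [← intervalIntegral.integral_neg]
    congr 1; funext z; ring
  rw [hneg]
  ring

/-! ### The square integral of a primitive -/

lemma intsq_P_le {h : Pt → ℝ} (hh : Continuous h) :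
    ∫ p in D3, (∫ t in (-1:ℝ)..p.2.2, h (p.1, p.2.1, t))^2 ≤ 4 * ∫ p in D3, (h p)^2 := by
  have hPc : Continuous fun p : Pt => ∫ t in (-1:ℝ)..p.2.2, h (p.1, p.2.1, t) := contP hh
  have hKc : Continuous fun p : Pt => ∫ t in (-1:ℝ)..(1:ℝ), (h (p.1, p.2.1, t))^2 := by
    apply intervalIntegral.continuous_parametric_intervalIntegral_of_continuous'
      (f := fun (p : Pt) (t : ℝ) => (h (p.1, p.2.1, t))^2) (μ := volume)
    exact (hh.comp (by fun_prop)).pow 2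
  have step1 : ∀ p ∈ D3,
      (∫ t in (-1:ℝ)..p.2.2, h (p.1, p.2.1, t))^2
        ≤ 2 * ∫ t in (-1:ℝ)..(1:ℝ), (h (p.1, p.2.1, t))^2 := by
    rintro ⟨x, y, z⟩ hp
    obtain ⟨hx, hy, hz⟩ := hp
    show (∫ t in (-1:ℝ)..z, h (x, y, t))^2 ≤ 2 * ∫ t in (-1:ℝ)..(1:ℝ), (h (x, y, t))^2
    have hcz : Continuous fun t => h (x, y, t) := hh.comp (by fun_prop)
    have c1 := cs1 hcz (show (-1:ℝ) ≤ z from hz.1)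
    have mono : (∫ t in (-1:ℝ)..z, (h (x, y, t))^2) ≤ ∫ t in (-1:ℝ)..(1:ℝ), (h (x, y, t))^2 :=
      intervalIntegral.integral_mono_interval le_rfl hz.1 hz.2
        (MeasureTheory.ae_of_all _ fun t => sq_nonneg _) ((hcz.pow 2).intervalIntegrable _ _)
    have hnn : 0 ≤ ∫ t in (-1:ℝ)..z, (h (x, y, t))^2 :=
      intervalIntegral.integral_nonneg hz.1 fun u _ => sq_nonneg _
    nlinarith [c1, mono, hnn, hz.1, hz.2]
  have step2 := setIntegral_mono_on (intOn (hPc.pow 2)) (intOn (continuous_const.mul hKc))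
    measurableSet_D3 step1
  have hvol : volume.real (Set.Icc (-1:ℝ) 1) = 2 := by
    rw [measureReal_def, Real.volume_Icc, ENNReal.toReal_ofReal (by norm_num)]; norm_num
  have e3 : (∫ p in D3, 2 * ∫ t in (-1:ℝ)..(1:ℝ), (h (p.1, p.2.1, t))^2)
      = 4 * ∫ p in D3, (h p)^2 := by
    rw [fubini3 (continuous_const.fun_mul hKc), fubini3 (hh.fun_pow 2), ← MeasureTheory.integral_const_mul]
    refine integral_congr_ae (Filter.Eventually.of_forall fun x => ?_)
    show _ = 4 * ∫ y in I1, ∫ z in I2, (h (x, y, z))^2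
    rw [← MeasureTheory.integral_const_mul]
    refine integral_congr_ae (Filter.Eventually.of_forall fun y => ?_)
    show (∫ z in I2, 2 * ∫ t in (-1:ℝ)..(1:ℝ), (h (x, y, t))^2)
        = 4 * ∫ z in I2, (h (x, y, z))^2
    rw [MeasureTheory.setIntegral_const, hvol, smul_eq_mul, Icc_int (-1) 1 (by norm_num)]
    ring
  calc ∫ p in D3, (∫ t in (-1:ℝ)..p.2.2, h (p.1, p.2.1, t))^2
      ≤ ∫ p in D3, 2 * ∫ t in (-1:ℝ)..(1:ℝ), (h (p.1, p.2.1, t))^2 := step2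
    _ = 4 * ∫ p in D3, (h p)^2 := e3

/-! ### The three main estimates -/

lemma pair_lap {v1 v2 T : Pt → ℝ} (h1 : Smooth3 v1) (h2 : Smooth3 v2) (h3 : Smooth3 T) :
    ∫ p in D3, (-(lap v1 p) * v1 p + (-(lap v2 p) * v2 p + -(lap T p) * T p))
      = ∫ p in D3, (gradSq v1 p + gradSq v2 p + gradSq T p) := by
  have cl : ∀ {u : Pt → ℝ}, Smooth3 u → Continuous fun p => -(lap u p) * u p := by
    intro u hu
    exact ((((sm_dX (sm_dX hu.1)).continuous.add (sm_dY (sm_dY hu.1)).continuous).add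
      (sm_dZ (sm_dZ hu.1)).continuous).neg).mul hu.1.continuous
  have cg : ∀ {u : Pt → ℝ}, Smooth3 u → Continuous (gradSq u) := by
    intro u hu
    exact (((sm_dX hu.1).continuous.pow 2).add ((sm_dY hu.1).continuous.pow 2)).add
      ((sm_dZ hu.1).continuous.pow 2)
  rw [MeasureTheory.integral_add (intOn (cl h1)) (intOn ((cl h2).fun_add (cl h3))),
    MeasureTheory.integral_add (intOn (cl h2)) (intOn (cl h3)),
    lap_pair h1, lap_pair h2, lap_pair h3,
    ← MeasureTheory.integral_add (intOn (cg h2)) (intOn (cg h3)),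
    ← MeasureTheory.integral_add (intOn (cg h1)) (intOn ((cg h2).fun_add (cg h3)))]
  exact integral_congr_ae (Filter.Eventually.of_forall fun p => by ring)

set_option maxHeartbeats 1000000 in
lemma pairB_zero {v1 v2 T : Pt → ℝ} (h1 : Smooth3 v1) (h2 : Smooth3 v2) (h3 : Smooth3 T)
    (hdiv : DivFreeV (v1, v2)) :
    pairF (BF ((v1, v2), T) ((v1, v2), T)) ((v1, v2), T) = 0 := by
  have hd1 : Differentiable ℝ v1 := h1.1.differentiable (by simp)
  have hd2 : Differentiable ℝ v2 := h2.1.differentiable (by simp)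
  have hd3 : Differentiable ℝ T := h3.1.differentiable (by simp)
  obtain ⟨Q, hQ⟩ : ∃ Q : Pt → ℝ, Q = fun p => v1 p * v1 p + v2 p * v2 p + T p * T p := ⟨_, rfl⟩
  have hQs : Smooth3 Q := by
    rw [hQ]
    exact smooth3_add (smooth3_add (smooth3_mul h1 h1) (smooth3_mul h2 h2)) (smooth3_mul h3 h3)
  have hdQ : ∀ (p : Pt) (w : Pt), fderiv ℝ Q p w
      = 2 * (v1 p * fderiv ℝ v1 p w) + 2 * (v2 p * fderiv ℝ v2 p w)
        + 2 * (T p * fderiv ℝ T p w) := by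
    intro p w
    rw [hQ]
    exact fderiv_Q hd1 hd2 hd3 p w
  have cPhi : Continuous (Phi (v1, v2)) := cont_Phi ⟨h1, h2⟩
  have cQ1 : Continuous fun p => v1 p * dX Q p := h1.1.continuous.mul (sm_dX hQs.1).continuous
  have cQ2 : Continuous fun p => v2 p * dY Q p := h2.1.continuous.mul (sm_dY hQs.1).continuous
  have cQ3 : Continuous fun p => Phi (v1, v2) p * dZ Q p := cPhi.mul (sm_dZ hQs.1).continuous
  have hpt : ∀ p : Pt,
      2 * ((advH (v1, v2) v1 p + Phi (v1, v2) p * dZ v1 p) * v1 p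
        + (advH (v1, v2) v2 p + Phi (v1, v2) p * dZ v2 p) * v2 p
        + (advH (v1, v2) T p + Phi (v1, v2) p * dZ T p) * T p)
      = v1 p * dX Q p + (v2 p * dY Q p + Phi (v1, v2) p * dZ Q p) := by
    intro p
    have e1 := hdQ p ((1:ℝ), (0:ℝ), (0:ℝ))
    have e2 := hdQ p ((0:ℝ), (1:ℝ), (0:ℝ))
    have e3 := hdQ p ((0:ℝ), (0:ℝ), (1:ℝ))
    simp only [advH, dX, dY, dZ]
    rw [e1, e2, e3]
    ring
  have h2pair : 2 * pairF (BF ((v1, v2), T) ((v1, v2), T)) ((v1, v2), T)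
      = ∫ p in D3, (v1 p * dX Q p + (v2 p * dY Q p + Phi (v1, v2) p * dZ Q p)) := by
    unfold pairF
    rw [← MeasureTheory.integral_const_mul]
    exact integral_congr_ae (Filter.Eventually.of_forall fun p => hpt p)
  rw [MeasureTheory.integral_add (intOn cQ1) (intOn (cQ2.fun_add cQ3)),
    MeasureTheory.integral_add (intOn cQ2) (intOn cQ3)] at h2pair
  have mcomm : ∀ f g : Pt → ℝ, ∫ p in D3, f p * g p = ∫ p in D3, g p * f p := fun f g =>
    integral_congr_ae (Filter.Eventually.of_forall fun p => mul_comm _ _)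
  have iA : ∫ p in D3, v1 p * dX Q p = -∫ p in D3, Q p * dX v1 p := by
    rw [mcomm v1 (dX Q)]; exact ibpX hQs h1
  have iB : ∫ p in D3, v2 p * dY Q p = -∫ p in D3, Q p * dY v2 p := by
    rw [mcomm v2 (dY Q)]; exact ibpY hQs h2
  have iC : ∫ p in D3, Phi (v1, v2) p * dZ Q p = ∫ p in D3, divH (v1, v2) p * Q p :=
    phi_ibp ⟨h1, h2⟩ hdiv hQs.1
  have iC' : ∫ p in D3, divH (v1, v2) p * Q p
      = (∫ p in D3, dX v1 p * Q p) + ∫ p in D3, dY v2 p * Q p := by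
    rw [← MeasureTheory.integral_add (intOn ((sm_dX h1.1).continuous.fun_mul hQs.1.continuous))
      (intOn ((sm_dY h2.1).continuous.fun_mul hQs.1.continuous))]
    refine integral_congr_ae (Filter.Eventually.of_forall fun p => ?_)
    show (dX v1 p + dY v2 p) * Q p = dX v1 p * Q p + dY v2 p * Q p
    ring
  have m1 : ∫ p in D3, Q p * dX v1 p = ∫ p in D3, dX v1 p * Q p := mcomm _ _
  have m2 : ∫ p in D3, Q p * dY v2 p = ∫ p in D3, dY v2 p * Q p := mcomm _ _
  rw [iA, iB, iC, iC', m1, m2] at h2pair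
  linarith

set_option maxHeartbeats 2000000 in
lemma pairG_bound (fc : ℝ) {v1 v2 T : Pt → ℝ} (h1 : Smooth3 v1) (h2 : Smooth3 v2)
    (h3 : Smooth3 T) :
    |pairF (GF fc ((v1, v2), T)) ((v1, v2), T)|
      ≤ 7 * L2F ((v1, v2), T) * W12F ((v1, v2), T) := by
  have c1 : Continuous v1 := h1.1.continuous
  have c2 : Continuous v2 := h2.1.continuous
  have cT : Continuous T := h3.1.continuous
  have cdXT : Continuous (dX T) := (sm_dX h3.1).continuous
  have cdYT : Continuous (dY T) := (sm_dY h3.1).continuous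
  have cP1 : Continuous fun p : Pt => ∫ t in (-1:ℝ)..p.2.2, dX T (p.1, p.2.1, t) := contP cdXT
  have cP2 : Continuous fun p : Pt => ∫ t in (-1:ℝ)..p.2.2, dY T (p.1, p.2.1, t) := contP cdYT
  have cdiv : Continuous (divH (v1, v2)) := cont_divH ⟨h1, h2⟩
  have cPhi : Continuous (Phi (v1, v2)) := cont_Phi ⟨h1, h2⟩
  obtain ⟨GI, hGI⟩ : ∃ r : ℝ, r = ∫ p in D3,
      (v1 p ^ 2 + v2 p ^ 2 + T p ^ 2 + gradSq v1 p + gradSq v2 p + gradSq T p) := ⟨_, rfl⟩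
  obtain ⟨LI, hLI⟩ : ∃ r : ℝ, r = ∫ p in D3, (v1 p ^ 2 + v2 p ^ 2 + T p ^ 2) := ⟨_, rfl⟩
  have cg : ∀ {u : Pt → ℝ}, Smooth3 u → Continuous (gradSq u) := by
    intro u hu
    exact (((sm_dX hu.1).continuous.pow 2).add ((sm_dY hu.1).continuous.pow 2)).add
      ((sm_dZ hu.1).continuous.pow 2)
  have cBIG : Continuous fun p : Pt =>
      v1 p ^ 2 + v2 p ^ 2 + T p ^ 2 + gradSq v1 p + gradSq v2 p + gradSq T p := by
    exact (((((c1.pow 2).add (c2.pow 2)).add (cT.pow 2)).add (cg h1)).add (cg h2)).add (cg h3)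
  have cSQ : Continuous fun p : Pt => v1 p ^ 2 + v2 p ^ 2 + T p ^ 2 :=
    ((c1.pow 2).add (c2.pow 2)).add (cT.pow 2)
  have hGInn : 0 ≤ GI := by
    rw [hGI]
    refine setIntegral_nonneg measurableSet_D3 fun p _ => ?_
    simp only [gradSq]; positivity
  have hLInn : 0 ≤ LI := by
    rw [hLI]
    exact setIntegral_nonneg measurableSet_D3 fun p _ => by positivity
  have hW : W12F ((v1, v2), T) = Real.sqrt GI := by rw [hGI]; rfl
  have hL : L2F ((v1, v2), T) = Real.sqrt LI := by rw [hLI]; rfl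
  -- pointwise domination lemmas
  have sub_le : ∀ {f : Pt → ℝ}, Continuous f → (∀ p, (f p)^2 ≤ v1 p ^ 2 + v2 p ^ 2 + T p ^ 2
      + gradSq v1 p + gradSq v2 p + gradSq T p) → ∫ p in D3, (f p)^2 ≤ GI := by
    intro f hf hpt
    rw [hGI]
    exact setIntegral_mono_on (intOn (hf.pow 2)) (intOn cBIG) measurableSet_D3
      fun p _ => hpt p
  have gnn : ∀ (u : Pt → ℝ) (p : Pt), 0 ≤ gradSq u p := fun u p => by
    simp only [gradSq]; positivity
  have sdXT : ∫ p in D3, (dX T p)^2 ≤ GI := by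
    refine sub_le cdXT fun p => ?_
    have := gnn v1 p; have := gnn v2 p
    simp only [gradSq] at *
    nlinarith [sq_nonneg (v1 p), sq_nonneg (v2 p), sq_nonneg (T p),
      sq_nonneg (dY T p), sq_nonneg (dZ T p)]
  have sdYT : ∫ p in D3, (dY T p)^2 ≤ GI := by
    refine sub_le cdYT fun p => ?_
    have := gnn v1 p; have := gnn v2 p
    simp only [gradSq] at *
    nlinarith [sq_nonneg (v1 p), sq_nonneg (v2 p), sq_nonneg (T p),
      sq_nonneg (dX T p), sq_nonneg (dZ T p)]
  have sdiv : ∫ p in D3, (divH (v1, v2) p)^2 ≤ 2 * GI := by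
    rw [hGI, ← MeasureTheory.integral_const_mul]
    refine setIntegral_mono_on (intOn (cdiv.pow 2)) (intOn (continuous_const.mul cBIG))
      measurableSet_D3 fun p _ => ?_
    show (dX v1 p + dY v2 p)^2 ≤ 2 * (v1 p ^ 2 + v2 p ^ 2 + T p ^ 2
      + gradSq v1 p + gradSq v2 p + gradSq T p)
    have := gnn T p
    simp only [gradSq] at *
    nlinarith [sq_nonneg (v1 p), sq_nonneg (v2 p), sq_nonneg (T p), sq_nonneg (dX v1 p - dY v2 p),
      sq_nonneg (dY v1 p), sq_nonneg (dZ v1 p), sq_nonneg (dX v2 p), sq_nonneg (dZ v2 p)]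
  -- L² bounds for the components
  have lv1 : ∫ p in D3, (v1 p)^2 ≤ LI := by
    rw [hLI]
    refine setIntegral_mono_on (intOn (c1.pow 2)) (intOn cSQ) measurableSet_D3 fun p _ => ?_
    nlinarith [sq_nonneg (v2 p), sq_nonneg (T p)]
  have lv2 : ∫ p in D3, (v2 p)^2 ≤ LI := by
    rw [hLI]
    refine setIntegral_mono_on (intOn (c2.pow 2)) (intOn cSQ) measurableSet_D3 fun p _ => ?_
    nlinarith [sq_nonneg (v1 p), sq_nonneg (T p)]
  have lT : ∫ p in D3, (T p)^2 ≤ LI := by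
    rw [hLI]
    refine setIntegral_mono_on (intOn (cT.pow 2)) (intOn cSQ) measurableSet_D3 fun p _ => ?_
    nlinarith [sq_nonneg (v1 p), sq_nonneg (v2 p)]
  -- the three Cauchy-Schwarz estimates
  have sqrt4 : Real.sqrt 4 = 2 := by
    rw [show (4:ℝ) = 2^2 by norm_num, Real.sqrt_sq (by norm_num : (0:ℝ) ≤ 2)]
  have sqrt9 : Real.sqrt 9 = 3 := by
    rw [show (9:ℝ) = 3^2 by norm_num, Real.sqrt_sq (by norm_num : (0:ℝ) ≤ 3)]
  have sqGI : ∀ {c r : ℝ}, 0 ≤ c → r ≤ c^2 * GI → Real.sqrt r ≤ c * Real.sqrt GI := by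
    intro c r hc hr
    calc Real.sqrt r ≤ Real.sqrt (c^2 * GI) := Real.sqrt_le_sqrt hr
      _ = c * Real.sqrt GI := by
          rw [Real.sqrt_mul (by positivity) GI, Real.sqrt_sq hc]
  have B1 : |∫ p in D3, (∫ t in (-1:ℝ)..p.2.2, dX T (p.1, p.2.1, t)) * v1 p|
      ≤ 2 * (Real.sqrt LI * Real.sqrt GI) := by
    have hb := csD3 cP1 c1
    have t1 : Real.sqrt (∫ p in D3, (∫ t in (-1:ℝ)..p.2.2, dX T (p.1, p.2.1, t))^2)
        ≤ 2 * Real.sqrt GI := by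
      refine sqGI (by norm_num) ?_
      calc (∫ p in D3, (∫ t in (-1:ℝ)..p.2.2, dX T (p.1, p.2.1, t))^2)
          ≤ 4 * ∫ p in D3, (dX T p)^2 := intsq_P_le cdXT
        _ ≤ 2^2 * GI := by nlinarith [sdXT]
    have u1 : Real.sqrt (∫ p in D3, (v1 p)^2) ≤ Real.sqrt LI := Real.sqrt_le_sqrt lv1
    calc |∫ p in D3, (∫ t in (-1:ℝ)..p.2.2, dX T (p.1, p.2.1, t)) * v1 p| ≤ _ := hb
      _ ≤ (2 * Real.sqrt GI) * Real.sqrt LI :=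
          mul_le_mul t1 u1 (Real.sqrt_nonneg _) (by positivity)
      _ = 2 * (Real.sqrt LI * Real.sqrt GI) := by ring
  have B2 : |∫ p in D3, (∫ t in (-1:ℝ)..p.2.2, dY T (p.1, p.2.1, t)) * v2 p|
      ≤ 2 * (Real.sqrt LI * Real.sqrt GI) := by
    have hb := csD3 cP2 c2
    have t1 : Real.sqrt (∫ p in D3, (∫ t in (-1:ℝ)..p.2.2, dY T (p.1, p.2.1, t))^2)
        ≤ 2 * Real.sqrt GI := by
      refine sqGI (by norm_num) ?_
      calc (∫ p in D3, (∫ t in (-1:ℝ)..p.2.2, dY T (p.1, p.2.1, t))^2)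
          ≤ 4 * ∫ p in D3, (dY T p)^2 := intsq_P_le cdYT
        _ ≤ 2^2 * GI := by nlinarith [sdYT]
    have u1 : Real.sqrt (∫ p in D3, (v2 p)^2) ≤ Real.sqrt LI := Real.sqrt_le_sqrt lv2
    calc |∫ p in D3, (∫ t in (-1:ℝ)..p.2.2, dY T (p.1, p.2.1, t)) * v2 p| ≤ _ := hb
      _ ≤ (2 * Real.sqrt GI) * Real.sqrt LI :=
          mul_le_mul t1 u1 (Real.sqrt_nonneg _) (by positivity)
      _ = 2 * (Real.sqrt LI * Real.sqrt GI) := by ring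
  have B3 : |∫ p in D3, Phi (v1, v2) p * T p| ≤ 3 * (Real.sqrt LI * Real.sqrt GI) := by
    have hb := csD3 cPhi cT
    have ePhi : ∫ p in D3, (Phi (v1, v2) p)^2
        = ∫ p in D3, (∫ t in (-1:ℝ)..p.2.2, divH (v1, v2) (p.1, p.2.1, t))^2 := by
      refine integral_congr_ae (Filter.Eventually.of_forall fun p => ?_)
      show (-(∫ t in (-1:ℝ)..p.2.2, divH (v1, v2) (p.1, p.2.1, t)))^2 = _
      rw [neg_sq]
    have t1 : Real.sqrt (∫ p in D3, (Phi (v1, v2) p)^2) ≤ 3 * Real.sqrt GI := by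
      refine sqGI (by norm_num) ?_
      rw [ePhi]
      calc (∫ p in D3, (∫ t in (-1:ℝ)..p.2.2, divH (v1, v2) (p.1, p.2.1, t))^2)
          ≤ 4 * ∫ p in D3, (divH (v1, v2) p)^2 := intsq_P_le cdiv
        _ ≤ 3^2 * GI := by nlinarith [sdiv]
    have u1 : Real.sqrt (∫ p in D3, (T p)^2) ≤ Real.sqrt LI := Real.sqrt_le_sqrt lT
    calc |∫ p in D3, Phi (v1, v2) p * T p| ≤ _ := hb
      _ ≤ (3 * Real.sqrt GI) * Real.sqrt LI :=
          mul_le_mul t1 u1 (Real.sqrt_nonneg _) (by positivity)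
      _ = 3 * (Real.sqrt LI * Real.sqrt GI) := by ring
  -- split the pairing
  have cA : Continuous fun p : Pt => (∫ t in (-1:ℝ)..p.2.2, dX T (p.1, p.2.1, t)) * v1 p :=
    cP1.mul c1
  have cB : Continuous fun p : Pt => (∫ t in (-1:ℝ)..p.2.2, dY T (p.1, p.2.1, t)) * v2 p :=
    cP2.mul c2
  have cC : Continuous fun p : Pt => Phi (v1, v2) p * T p := cPhi.mul cT
  have e0 : pairF (GF fc ((v1, v2), T)) ((v1, v2), T)
      = ∫ p in D3, (-((∫ t in (-1:ℝ)..p.2.2, dX T (p.1, p.2.1, t)) * v1 p)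
          + (-((∫ t in (-1:ℝ)..p.2.2, dY T (p.1, p.2.1, t)) * v2 p)
            + Phi (v1, v2) p * T p)) := by
    unfold pairF
    refine integral_congr_ae (Filter.Eventually.of_forall fun p => ?_)
    show (-fc * v2 p - ∫ t in (-1:ℝ)..p.2.2, dX T (p.1, p.2.1, t)) * v1 p
        + (fc * v1 p - ∫ t in (-1:ℝ)..p.2.2, dY T (p.1, p.2.1, t)) * v2 p
        + Phi (v1, v2) p * T p = _
    ring
  rw [e0, MeasureTheory.integral_add (intOn cA.fun_neg) (intOn (cB.fun_neg.fun_add cC)),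
    MeasureTheory.integral_add (intOn cB.fun_neg) (intOn cC),
    MeasureTheory.integral_neg, MeasureTheory.integral_neg, hL, hW]
  have habs : |(-(∫ p in D3, (∫ t in (-1:ℝ)..p.2.2, dX T (p.1, p.2.1, t)) * v1 p))
      + ((-(∫ p in D3, (∫ t in (-1:ℝ)..p.2.2, dY T (p.1, p.2.1, t)) * v2 p))
        + ∫ p in D3, Phi (v1, v2) p * T p)|
      ≤ |∫ p in D3, (∫ t in (-1:ℝ)..p.2.2, dX T (p.1, p.2.1, t)) * v1 p|
        + (|∫ p in D3, (∫ t in (-1:ℝ)..p.2.2, dY T (p.1, p.2.1, t)) * v2 p|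
          + |∫ p in D3, Phi (v1, v2) p * T p|) := by
    refine le_trans (abs_add_le _ _) ?_
    rw [abs_neg]
    gcongr
    refine le_trans (abs_add_le _ _) ?_
    rw [abs_neg]
  refine le_trans habs ?_
  linarith [B1, B2, B3]

end PEProof

open PEProof in
set_option maxHeartbeats 2000000 in
/-- coercivity
`⟨−ΔU + B(U,U) + G(U), U⟩ ≥ ½‖U‖² − λ₁(1 + |U|²)`, together with
`(B(U,U), U) = 0` and `|(G(U), U)| ≤ C |U| ‖U‖`. -/
theorem coercivity_condition (fc : ℝ) :
    ∃ lam₁ : ℝ, 0 ≤ lam₁ ∧ ∃ C : ℝ,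
      ∀ U : Fld, SmoothF U → MeanZeroF U → DivFreeV U.1 →
        (1 / 2) * (W12F U) ^ 2 - lam₁ * (1 + (L2F U) ^ 2) ≤ pairF (PEop fc U) U ∧
        pairF (BF U U) U = 0 ∧
        |pairF (GF fc U) U| ≤ C * L2F U * W12F U := by
  refine ⟨1 + 7 ^ 2 / 2, by norm_num, 7, fun U hU _hmz hdiv => ?_⟩
  obtain ⟨⟨hs1, hs2⟩, hsT⟩ := hU
  have hB : pairF (BF U U) U = 0 := pairB_zero hs1 hs2 hsT hdiv
  have hG : |pairF (GF fc U) U| ≤ 7 * L2F U * W12F U := pairG_bound fc hs1 hs2 hsT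
  refine ⟨?_, hB, hG⟩
  -- continuity facts
  have c1 : Continuous U.1.1 := hs1.1.continuous
  have c2 : Continuous U.1.2 := hs2.1.continuous
  have cT : Continuous U.2 := hsT.1.continuous
  have cPhi : Continuous (Phi U.1) := cont_Phi ⟨hs1, hs2⟩
  have clap : ∀ {u : Pt → ℝ}, Smooth3 u → Continuous (lap u) := by
    intro u hu
    exact ((sm_dX (sm_dX hu.1)).continuous.add (sm_dY (sm_dY hu.1)).continuous).add
      (sm_dZ (sm_dZ hu.1)).continuous
  have cg : ∀ {u : Pt → ℝ}, Smooth3 u → Continuous (gradSq u) := by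
    intro u hu
    exact (((sm_dX hu.1).continuous.pow 2).add ((sm_dY hu.1).continuous.pow 2)).add
      ((sm_dZ hu.1).continuous.pow 2)
  have cLap : Continuous fun p : Pt => -(lap U.1.1 p) * U.1.1 p
      + (-(lap U.1.2 p) * U.1.2 p + -(lap U.2 p) * U.2 p) :=
    (((clap hs1).neg).mul c1).add ((((clap hs2).neg).mul c2).add (((clap hsT).neg).mul cT))
  have cBF1 : Continuous ((BF U U).1.1) :=
    ((c1.mul (sm_dX hs1.1).continuous).add (c2.mul (sm_dY hs1.1).continuous)).add
      (cPhi.mul (sm_dZ hs1.1).continuous)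
  have cBF2 : Continuous ((BF U U).1.2) :=
    ((c1.mul (sm_dX hs2.1).continuous).add (c2.mul (sm_dY hs2.1).continuous)).add
      (cPhi.mul (sm_dZ hs2.1).continuous)
  have cBFT : Continuous ((BF U U).2) :=
    ((c1.mul (sm_dX hsT.1).continuous).add (c2.mul (sm_dY hsT.1).continuous)).add
      (cPhi.mul (sm_dZ hsT.1).continuous)
  have cBint : Continuous fun p : Pt => (BF U U).1.1 p * U.1.1 p
      + (BF U U).1.2 p * U.1.2 p + (BF U U).2 p * U.2 p :=
    ((cBF1.mul c1).add (cBF2.mul c2)).add (cBFT.mul cT)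
  have cGF1 : Continuous ((GF fc U).1.1) :=
    (continuous_const.mul c2).sub (contP (sm_dX hsT.1).continuous)
  have cGF2 : Continuous ((GF fc U).1.2) :=
    (continuous_const.mul c1).sub (contP (sm_dY hsT.1).continuous)
  have cGFT : Continuous ((GF fc U).2) := cPhi
  have cGint : Continuous fun p : Pt => (GF fc U).1.1 p * U.1.1 p
      + (GF fc U).1.2 p * U.1.2 p + (GF fc U).2 p * U.2 p :=
    ((cGF1.mul c1).add (cGF2.mul c2)).add (cGFT.mul cT)
  -- splitting of the drift pairing
  have hsplit : pairF (PEop fc U) U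
      = (∫ p in D3, (-(lap U.1.1 p) * U.1.1 p
          + (-(lap U.1.2 p) * U.1.2 p + -(lap U.2 p) * U.2 p)))
        + ((∫ p in D3, ((BF U U).1.1 p * U.1.1 p + (BF U U).1.2 p * U.1.2 p
            + (BF U U).2 p * U.2 p))
          + (∫ p in D3, ((GF fc U).1.1 p * U.1.1 p + (GF fc U).1.2 p * U.1.2 p
            + (GF fc U).2 p * U.2 p))) := by
    unfold pairF
    rw [← MeasureTheory.integral_add (intOn cBint) (intOn cGint),
      ← MeasureTheory.integral_add (intOn cLap) (intOn (cBint.fun_add cGint))]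
    refine integral_congr_ae (Filter.Eventually.of_forall fun p => ?_)
    show (-(lap U.1.1 p) + (BF U U).1.1 p + (GF fc U).1.1 p) * U.1.1 p
        + (-(lap U.1.2 p) + (BF U U).1.2 p + (GF fc U).1.2 p) * U.1.2 p
        + (-(lap U.2 p) + (BF U U).2 p + (GF fc U).2 p) * U.2 p = _
    ring
  have hBint : (∫ p in D3, ((BF U U).1.1 p * U.1.1 p + (BF U U).1.2 p * U.1.2 p
      + (BF U U).2 p * U.2 p)) = pairF (BF U U) U := rfl
  have hGint : (∫ p in D3, ((GF fc U).1.1 p * U.1.1 p + (GF fc U).1.2 p * U.1.2 p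
      + (GF fc U).2 p * U.2 p)) = pairF (GF fc U) U := rfl
  have hLap := pair_lap hs1 hs2 hsT
  -- norms
  have hW2 : W12F U ^ 2 = L2F U ^ 2 + ∫ p in D3,
      (gradSq U.1.1 p + gradSq U.1.2 p + gradSq U.2 p) := by
    have h1 : W12F U ^ 2 = ∫ p in D3, (U.1.1 p ^ 2 + U.1.2 p ^ 2 + U.2 p ^ 2
        + gradSq U.1.1 p + gradSq U.1.2 p + gradSq U.2 p) :=
      Real.sq_sqrt (setIntegral_nonneg measurableSet_D3 fun p _ => by
        simp only [gradSq]; positivity)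
    have h2 : L2F U ^ 2 = ∫ p in D3, (U.1.1 p ^ 2 + U.1.2 p ^ 2 + U.2 p ^ 2) :=
      Real.sq_sqrt (setIntegral_nonneg measurableSet_D3 fun p _ => by positivity)
    have cSQ : Continuous fun p : Pt => U.1.1 p ^ 2 + U.1.2 p ^ 2 + U.2 p ^ 2 :=
      ((c1.pow 2).add (c2.pow 2)).add (cT.pow 2)
    have cG3 : Continuous fun p : Pt => gradSq U.1.1 p + gradSq U.1.2 p + gradSq U.2 p :=
      ((cg hs1).add (cg hs2)).add (cg hsT)
    rw [h1, h2, ← MeasureTheory.integral_add (intOn cSQ) (intOn cG3)]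
    exact integral_congr_ae (Filter.Eventually.of_forall fun p => by ring)
  have hGlower : -(7 * L2F U * W12F U) ≤ pairF (GF fc U) U := (abs_le.1 hG).1
  rw [hsplit, hBint, hGint, hLap, hB]
  nlinarith [hW2, hGlower, sq_nonneg (W12F U - 7 * L2F U)]

end
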